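/- Typed terms preserve inner products (one variable): given a valid typing judgment Δ, x:♯A ⊢ s⃗ : C, a substitution σ ∈ ⟦Δ⟧ and value distributions u⃗₁, u⃗₂ ∈ ⟦♯A⟧, there exist value distributions w⃗₁, w⃗₂ ∈ ⟦C⟧ such that s⃗⟨σ, x:=u⃗₁⟩ ≻≻ w⃗₁, s⃗⟨σ, x:=u⃗₂⟩ ≻≻ w⃗₂ and ⟨w⃗₁|w⃗₂⟩ = ⟨u⃗₁|u⃗₂⟩. -/
import Mathlib


namespace LinAlg

/-! ### Syntax: pure values, pure terms, term distributions -/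

mutual
inductive Val : Type where
  | var : ℕ → Val
  | lam : ℕ → Distr → Val
  | star : Val
  | pair : Val → Val → Val
  | inl : Val → Val
  | inr : Val → Val
inductive Term : Type where
  | val : Val → Term
  | app : Term → Term → Term
  | seq : Term → Distr → Term
  | letp : ℕ → ℕ → Term → Distr → Term
  | matc : Term → ℕ → Distr → ℕ → Distr → Term
inductive Distr : Type where
  | zero : Distr
  | single : Term → Distr
  | add : Distr → Distr → Distr
  | smul : ℂ → Distr → Distr
end

noncomputable instance : DecidableEq Val := fun _ _ => Classical.dec _
noncomputable instance : DecidableEq Term := fun _ _ => Classical.dec _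
noncomputable instance : DecidableEq Distr := fun _ _ => Classical.dec _

/-! ### The shallow congruence ≡ on term distributions -/

inductive Cong : Distr → Distr → Prop where
  | addZero (d : Distr) : Cong (d.add .zero) d
  | oneSmul (d : Distr) : Cong (Distr.smul 1 d) d
  | smulSmul (a b : ℂ) (d : Distr) : Cong (Distr.smul a (Distr.smul b d)) (Distr.smul (a * b) d)
  | addComm (d₁ d₂ : Distr) : Cong (d₁.add d₂) (d₂.add d₁)
  | addAssoc (d₁ d₂ d₃ : Distr) : Cong ((d₁.add d₂).add d₃) (d₁.add (d₂.add d₃))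
  | smulDistrib (a b : ℂ) (d : Distr) : Cong (Distr.smul (a + b) d) ((Distr.smul a d).add (Distr.smul b d))
  | smulAdd (a : ℂ) (d₁ d₂ : Distr) : Cong (Distr.smul a (d₁.add d₂)) ((Distr.smul a d₁).add (Distr.smul a d₂))
  | refl (d : Distr) : Cong d d
  | symm {d₁ d₂ : Distr} : Cong d₁ d₂ → Cong d₂ d₁
  | trans {d₁ d₂ d₃ : Distr} : Cong d₁ d₂ → Cong d₂ d₃ → Cong d₁ d₃
  | addCongr {d₁ d₁' d₂ d₂' : Distr} : Cong d₁ d₁' → Cong d₂ d₂' → Cong (d₁.add d₂) (d₁'.add d₂')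
  | smulCongr (a : ℂ) {d d' : Distr} : Cong d d' → Cong (Distr.smul a d) (Distr.smul a d')

/-! ### Free variables -/

mutual
def fvV : Val → Finset ℕ
  | .var y => {y}
  | .lam y b => fvD b \ {y}
  | .star => ∅
  | .pair v₁ v₂ => fvV v₁ ∪ fvV v₂
  | .inl v => fvV v
  | .inr v => fvV v
def fvT : Term → Finset ℕ
  | .val v => fvV v
  | .app s t => fvT s ∪ fvT t
  | .seq t s => fvT t ∪ fvD s
  | .letp y z t s => fvT t ∪ (fvD s \ {y, z})
  | .matc t y s₁ z s₂ => fvT t ∪ (fvD s₁ \ {y}) ∪ (fvD s₂ \ {z})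
def fvD : Distr → Finset ℕ
  | .zero => ∅
  | .single t => fvT t
  | .add d₁ d₂ => fvD d₁ ∪ fvD d₂
  | .smul _ d => fvD d
end

/-! ### Pure substitution -/

mutual
def substV (x : ℕ) (w : Val) : Val → Val
  | .var y => if y = x then w else .var y
  | .lam y b => if y = x then .lam y b else .lam y (substD x w b)
  | .star => .star
  | .pair v₁ v₂ => .pair (substV x w v₁) (substV x w v₂)
  | .inl v => .inl (substV x w v)
  | .inr v => .inr (substV x w v)
def substT (x : ℕ) (w : Val) : Term → Term
  | .val v => .val (substV x w v)
  | .app s t => .app (substT x w s) (substT x w t)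
  | .seq t s => .seq (substT x w t) (substD x w s)
  | .letp y z t s =>
      .letp y z (substT x w t) (if y = x ∨ z = x then s else substD x w s)
  | .matc t y s₁ z s₂ =>
      .matc (substT x w t) y (if y = x then s₁ else substD x w s₁)
        z (if z = x then s₂ else substD x w s₂)
def substD (x : ℕ) (w : Val) : Distr → Distr
  | .zero => .zero
  | .single t => .single (substT x w t)
  | .add d₁ d₂ => .add (substD x w d₁) (substD x w d₂)
  | .smul a d => .smul a (substD x w d)
end

/-! ### Linear extensions of the syntactic constructs -/

def appTD (s : Term) : Distr → Distr
  | .zero => .zero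
  | .single t => .single (.app s t)
  | .add d₁ d₂ => .add (appTD s d₁) (appTD s d₂)
  | .smul a d => .smul a (appTD s d)

def appDV : Distr → Val → Distr
  | .zero, _ => .zero
  | .single t, v => .single (.app t (.val v))
  | .add d₁ d₂, v => .add (appDV d₁ v) (appDV d₂ v)
  | .smul a d, v => .smul a (appDV d v)

def seqD : Distr → Distr → Distr
  | .zero, _ => .zero
  | .single t, s => .single (.seq t s)
  | .add d₁ d₂, s => .add (seqD d₁ s) (seqD d₂ s)
  | .smul a d, s => .smul a (seqD d s)

def letpD (x y : ℕ) : Distr → Distr → Distr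
  | .zero, _ => .zero
  | .single t, s => .single (.letp x y t s)
  | .add d₁ d₂, s => .add (letpD x y d₁ s) (letpD x y d₂ s)
  | .smul a d, s => .smul a (letpD x y d s)

def matcD : Distr → ℕ → Distr → ℕ → Distr → Distr
  | .zero, _, _, _, _ => .zero
  | .single t, y, s₁, z, s₂ => .single (.matc t y s₁ z s₂)
  | .add d₁ d₂, y, s₁, z, s₂ => .add (matcD d₁ y s₁ z s₂) (matcD d₂ y s₁ z s₂)
  | .smul a d, y, s₁, z, s₂ => .smul a (matcD d y s₁ z s₂)

/-- Bilinear application of distributions:  (Σᵢ αᵢ·tᵢ)(Σⱼ βⱼ·sⱼ) = Σᵢⱼ αᵢβⱼ·(tᵢ sⱼ). -/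
def appD : Distr → Distr → Distr
  | .zero, _ => .zero
  | .single t, w => appTD t w
  | .add d₁ d₂, w => .add (appD d₁ w) (appD d₂ w)
  | .smul a d, w => .smul a (appD d w)

/-- Bilinear substitution  d⟨x := w⃗⟩ = Σⱼ βⱼ · d[x := wⱼ]  (recursion on the value
distribution w⃗; non-value summands are junk and are sent to 0⃗). -/
def bsubst (x : ℕ) (d : Distr) : Distr → Distr
  | .zero => .zero
  | .single (.val w) => substD x w d
  | .single _ => .zero
  | .add w₁ w₂ => .add (bsubst x d w₁) (bsubst x d w₂)
  | .smul a w => .smul a (bsubst x d w)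

/-! ### Evaluation -/

inductive Atom : Term → Distr → Prop where
  | beta (x : ℕ) (b : Distr) (v : Val) :
      Atom (.app (.val (.lam x b)) (.val v)) (substD x v b)
  | seqStar (s : Distr) : Atom (.seq (.val .star) s) s
  | letPair (x y : ℕ) (v w : Val) (s : Distr) :
      Atom (.letp x y (.val (.pair v w)) s) (substD y w (substD x v s))
  | matchInl (v : Val) (y : ℕ) (s₁ : Distr) (z : ℕ) (s₂ : Distr) :
      Atom (.matc (.val (.inl v)) y s₁ z s₂) (substD y v s₁)
  | matchInr (v : Val) (y : ℕ) (s₁ : Distr) (z : ℕ) (s₂ : Distr) :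
      Atom (.matc (.val (.inr v)) y s₁ z s₂) (substD z v s₂)
  | appR (s : Term) {t : Term} {d : Distr} : Atom t d → Atom (.app s t) (appTD s d)
  | appL (v : Val) {t : Term} {d : Distr} : Atom t d → Atom (.app t (.val v)) (appDV d v)
  | seqC (s : Distr) {t : Term} {d : Distr} : Atom t d → Atom (.seq t s) (seqD d s)
  | letC (x y : ℕ) (s : Distr) {t : Term} {d : Distr} :
      Atom t d → Atom (.letp x y t s) (letpD x y d s)
  | matcC (y : ℕ) (s₁ : Distr) (z : ℕ) (s₂ : Distr) {t : Term} {d : Distr} :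
      Atom t d → Atom (.matc t y s₁ z s₂) (matcD d y s₁ z s₂)

/-- One-step evaluation:  t⃗ ≻ t⃗′. -/
def Step (d d' : Distr) : Prop :=
  ∃ (a : ℂ) (s : Term) (s' r : Distr),
    Cong d (Distr.add (.smul a (.single s)) r) ∧
    Cong d' (Distr.add (.smul a s') r) ∧ Atom s s'

/-- Evaluation  t⃗ ≻≻ t⃗′:  reflexive-transitive closure of one-step evaluation. -/
def Eval : Distr → Distr → Prop := Relation.ReflTransGen Step

/-! ### Value distributions, inner product, norm -/

def IsValT : Term → Prop
  | .val _ => True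
  | _ => False

def IsValD : Distr → Prop
  | .zero => True
  | .single t => IsValT t
  | .add d₁ d₂ => IsValD d₁ ∧ IsValD d₂
  | .smul _ d => IsValD d

/-- The set of closed value distributions. -/
def ClosedValD : Set Distr := {d | IsValD d ∧ fvD d = ∅}

/-- Total coefficient of the pure term `t` in the distribution `d`. -/
noncomputable def coeff : Distr → Term → ℂ
  | .zero, _ => 0
  | .single s, t => if s = t then 1 else 0
  | .add d₁ d₂, t => coeff d₁ t + coeff d₂ t
  | .smul a d, t => a * coeff d t

/-- The domain of a distribution (all pure terms occurring in it, even with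
coefficient 0). -/
noncomputable def domD : Distr → Finset Term
  | .zero => ∅
  | .single t => {t}
  | .add d₁ d₂ => domD d₁ ∪ domD d₂
  | .smul _ d => domD d

/-- The inner product ⟨v⃗|w⃗⟩ on value distributions. -/
noncomputable def innerD (v w : Distr) : ℂ :=
  ∑ t ∈ domD v, (starRingEnd ℂ) (coeff v t) * coeff w t

/-- The pseudo-ℓ²-norm ‖v⃗‖. -/
noncomputable def normD (v : Distr) : ℝ := Real.sqrt (innerD v v).re

/-- The unit sphere S of closed value distributions of norm 1. -/
def Sphere : Set Distr := {d | d ∈ ClosedValD ∧ normD d = 1}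

/-- Span(X): weak linear combinations of elements of X (taken modulo ≡). -/
inductive Span (X : Set Distr) : Distr → Prop where
  | mem {d : Distr} : d ∈ X → Span X d
  | zero : Span X .zero
  | add {d₁ d₂ : Distr} : Span X d₁ → Span X d₂ → Span X (d₁.add d₂)
  | smul (a : ℂ) {d : Distr} : Span X d → Span X (Distr.smul a d)
  | congr {d d' : Distr} : Span X d → Cong d d' → Span X d'

/-! ### Realizability: unitary types -/

/-- t⃗ ⊩ A :  t⃗ evaluates to some vector of ⟦A⟧. -/
def Realizes (A : Set Distr) (t : Distr) : Prop := ∃ v ∈ A, Eval t v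

/-- |A| : the set of (closed) realizers of A. -/
def realizersOf (A : Set Distr) : Set Distr := {t | fvD t = ∅ ∧ Realizes A t}

/-! ### Type constructors -/

def UnitT : Set Distr := {Distr.single (.val .star)}

/-- ♭A : the basis of A. -/
def flatT (X : Set Distr) : Set Distr :=
  {e | ∃ d ∈ X, ∃ v : Val, (Term.val v) ∈ domD d ∧ e = Distr.single (.val v)}

/-- ♯A : the unitary span of A. -/
def sharpT (X : Set Distr) : Set Distr := {d | Span X d ∧ d ∈ Sphere}

/-- Linear extension of a value constructor. -/
def mapVD (f : Val → Val) : Distr → Distr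
  | .zero => .zero
  | .single (.val v) => .single (.val (f v))
  | .single t => .single t
  | .add d₁ d₂ => .add (mapVD f d₁) (mapVD f d₂)
  | .smul a d => .smul a (mapVD f d)

def inlD : Distr → Distr := mapVD Val.inl
def inrD : Distr → Distr := mapVD Val.inr

/-- Bilinear extension of pairing. -/
def pairD : Distr → Distr → Distr
  | .zero, _ => .zero
  | .single (.val v), w => mapVD (Val.pair v) w
  | .single t, _ => .single t
  | .add d₁ d₂, w => .add (pairD d₁ w) (pairD d₂ w)
  | .smul a d, w => .smul a (pairD d w)

/-- A + B (simple sum). -/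
def plusT (A B : Set Distr) : Set Distr :=
  {d | (∃ v ∈ A, d = inlD v) ∨ (∃ w ∈ B, d = inrD w)}

/-- A × B (simple product). -/
def timesT (A B : Set Distr) : Set Distr :=
  {d | ∃ v ∈ A, ∃ w ∈ B, d = pairD v w}

/-- A → B (pure arrow). -/
def arrowT (A B : Set Distr) : Set Distr :=
  {d | ∃ (x : ℕ) (b : Distr), d = Distr.single (.val (.lam x b)) ∧ fvD d = ∅ ∧
      ∀ v ∈ A, Realizes B (bsubst x b v)}

/-- Σᵢ αᵢ · λx.t⃗ᵢ  ↦  Σᵢ αᵢ · t⃗ᵢ  (strips the λx in front of each summand). -/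
def stripLam (x : ℕ) : Distr → Distr
  | .zero => .zero
  | .single (.val (.lam y b)) => if y = x then b else .single (.val (.lam y b))
  | .single t => .single t
  | .add d₁ d₂ => .add (stripLam x d₁) (stripLam x d₂)
  | .smul a d => .smul a (stripLam x d)

/-- A ⇒ B (unitary arrow). -/
def uarrowT (A B : Set Distr) : Set Distr :=
  {d | d ∈ Sphere ∧ ∃ x : ℕ,
      (∀ t ∈ domD d, ∃ b : Distr, t = Term.val (.lam x b)) ∧
      ∀ v ∈ A, Realizes B (bsubst x (stripLam x d) v)}

/-! ### Booleans -/

def ttD : Distr := .single (.val (.inl .star))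
def ffD : Distr := .single (.val (.inr .star))

/-- 𝔹 = 𝕌 + 𝕌. -/
def BoolT : Set Distr := plusT UnitT UnitT

/-- ♯𝔹, the type of unitary Booleans. -/
def sharpBool : Set Distr := sharpT BoolT

/-- Boolean projection π : Span({tt,ff}) → ℂ². -/
noncomputable def piB (d : Distr) : ℂ × ℂ :=
  (coeff d (.val (.inl .star)), coeff d (.val (.inr .star)))

/-- t⃗ represents the operator F : ℂ² → ℂ². -/
def Represents (td : Distr) (F : ℂ × ℂ → ℂ × ℂ) : Prop :=
  ∀ v, Span BoolT v → ∃ w, Span BoolT w ∧ Eval (appD td v) w ∧ piB w = F (piB v)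

/-- Hermitian inner product on ℂ². -/
def hinner (u v : ℂ × ℂ) : ℂ :=
  (starRingEnd ℂ) u.1 * v.1 + (starRingEnd ℂ) u.2 * v.2

/-- A unitary operator on ℂ². -/
def IsUnitaryOp (F : ℂ × ℂ → ℂ × ℂ) : Prop :=
  ∀ u v : ℂ × ℂ, hinner (F u) (F v) = hinner u v

/-! ### Typing contexts, substitutions, judgments -/

abbrev Ctx := List (ℕ × Set Distr)
abbrev Subst := List (ℕ × Distr)

/-- Applying a substitution, one bilinear substitution at a time. -/
def applySub : Distr → Subst → Distr
  | d, [] => d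
  | d, (x, w) :: σ => applySub (bsubst x d w) σ

/-- σ ∈ ⟦Γ⟧. -/
def SubMem (σ : Subst) (Γ : Ctx) : Prop :=
  List.Forall₂ (fun p q => p.1 = q.1 ∧ p.2 ∈ q.2) σ Γ

def ctxDom (Γ : Ctx) : Set ℕ := {x | ∃ A, (x, A) ∈ Γ}

/-- dom♯(Γ): the variables of Γ whose type is not a pure-value type. -/
def ctxDomSharp (Γ : Ctx) : Set ℕ := {x | ∃ A, (x, A) ∈ Γ ∧ flatT A ≠ A}

/-- All the types of the context are unitary types (subsets of the sphere). -/
def CtxUnitary (Γ : Ctx) : Prop := ∀ p ∈ Γ, p.2 ⊆ Sphere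

/-- Validity of the typing judgment  Γ ⊢ t⃗ : A. -/
def ValidJ (Γ : Ctx) (t : Distr) (A : Set Distr) : Prop :=
  ctxDomSharp Γ ⊆ (fvD t : Set ℕ) ∧ (fvD t : Set ℕ) ⊆ ctxDom Γ ∧
  ∀ σ : Subst, SubMem σ Γ → Realizes A (applySub t σ)

/-- Validity of the orthogonality judgment  Γ | Δ₁ ⊢ t⃗₁ ⊥ Δ₂ ⊢ t⃗₂ : A. -/
def OrthoJ (Γ Δ₁ Δ₂ : Ctx) (t₁ t₂ : Distr) (A : Set Distr) : Prop :=
  ValidJ (Γ ++ Δ₁) t₁ A ∧ ValidJ (Γ ++ Δ₂) t₂ A ∧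
  ∀ σ σ₁ σ₂ : Subst, SubMem σ Γ → SubMem σ₁ Δ₁ → SubMem σ₂ Δ₂ →
    ∀ v₁ v₂ : Distr, v₁ ∈ ClosedValD → v₂ ∈ ClosedValD →
      Eval (applySub t₁ (σ ++ σ₁)) v₁ → Eval (applySub t₂ (σ ++ σ₂)) v₂ →
      innerD v₁ v₂ = 0

end LinAlg

namespace LinAlg

/-! ## Auxiliary lemmas -/

open Complex

theorem coeff_eq_zero : ∀ (d : Distr) (t : Term), t ∉ domD d → coeff d t = 0
  | .zero, t, _ => rfl
  | .single s, t, h => by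
      simp only [domD, Finset.mem_singleton] at h
      rw [coeff, if_neg (fun hst : s = t => h hst.symm)]
  | .add d₁ d₂, t, h => by
      simp only [domD, Finset.mem_union, not_or] at h
      simp [coeff, coeff_eq_zero d₁ t h.1, coeff_eq_zero d₂ t h.2]
  | .smul a d, t, h => by
      simp only [domD] at h
      simp [coeff, coeff_eq_zero d t h]

theorem cong_coeff {d d' : Distr} (h : Cong d d') : ∀ t, coeff d t = coeff d' t := by
  induction h with
  | addZero d => intro t; simp [coeff]
  | oneSmul d => intro t; simp [coeff]
  | smulSmul a b d => intro t; simp [coeff, mul_assoc]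
  | addComm d₁ d₂ => intro t; simp [coeff, add_comm]
  | addAssoc d₁ d₂ d₃ => intro t; simp [coeff, add_assoc]
  | smulDistrib a b d => intro t; simp [coeff, add_mul]
  | smulAdd a d₁ d₂ => intro t; simp [coeff, mul_add]
  | refl d => intro t; rfl
  | symm _ ih => intro t; exact (ih t).symm
  | trans _ _ ih₁ ih₂ => intro t; exact (ih₁ t).trans (ih₂ t)
  | addCongr _ _ ih₁ ih₂ => intro t; simp [coeff, ih₁ t, ih₂ t]
  | smulCongr a _ ih => intro t; simp [coeff, ih t]

theorem cong_domD {d d' : Distr} (h : Cong d d') : domD d = domD d' := by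
  induction h with
  | addZero d => simp [domD]
  | oneSmul d => simp [domD]
  | smulSmul a b d => simp [domD]
  | addComm d₁ d₂ => simp [domD, Finset.union_comm]
  | addAssoc d₁ d₂ d₃ => simp [domD, Finset.union_assoc]
  | smulDistrib a b d => simp [domD]
  | smulAdd a d₁ d₂ => simp [domD]
  | refl d => rfl
  | symm _ ih => exact ih.symm
  | trans _ _ ih₁ ih₂ => exact ih₁.trans ih₂
  | addCongr _ _ ih₁ ih₂ => simp [domD, ih₁, ih₂]
  | smulCongr a _ ih => simp [domD, ih]

theorem atom_not_val {v : Val} {d : Distr} (h : Atom (.val v) d) : False := by cases h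

theorem atom_det {t : Term} {d d' : Distr} (h : Atom t d) (h' : Atom t d') : d = d' := by
  induction h generalizing d' with
  | beta x b v => cases h' with
    | beta => rfl
    | appR _ h => exact absurd h atom_not_val
    | appL _ h => exact absurd h atom_not_val
  | seqStar s => cases h' with
    | seqStar => rfl
    | seqC _ h => exact absurd h atom_not_val
  | letPair x y v w s => cases h' with
    | letPair => rfl
    | letC _ _ _ h => exact absurd h atom_not_val
  | matchInl v y s₁ z s₂ => cases h' with
    | matchInl => rfl
    | matcC _ _ _ _ h => exact absurd h atom_not_val
  | matchInr v y s₁ z s₂ => cases h' with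
    | matchInr => rfl
    | matcC _ _ _ _ h => exact absurd h atom_not_val
  | appR s h ih => cases h' with
    | beta => exact absurd h atom_not_val
    | appR _ h₂ => rw [ih h₂]
    | appL _ _ => exact absurd h atom_not_val
  | appL v h ih => cases h' with
    | beta => exact absurd h atom_not_val
    | appR _ h₂ => exact absurd h₂ atom_not_val
    | appL _ h₂ => rw [ih h₂]
  | seqC s h ih => cases h' with
    | seqStar => exact absurd h atom_not_val
    | seqC _ h₂ => rw [ih h₂]
  | letC x y s h ih => cases h' with
    | letPair => exact absurd h atom_not_val
    | letC _ _ _ h₂ => rw [ih h₂]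
  | matcC y s₁ z s₂ h ih => cases h' with
    | matchInl => exact absurd h atom_not_val
    | matchInr => exact absurd h atom_not_val
    | matcC _ _ _ _ h₂ => rw [ih h₂]

/-- Big-step coefficient semantics on pure terms. -/
inductive Big : Term → (Term → ℂ) → Prop where
  | val (v : Val) : Big (.val v) (fun u => if Term.val v = u then 1 else 0)
  | step {t : Term} {d : Distr} (f : Term → Term → ℂ) :
      Atom t d → (∀ t' ∈ domD d, Big t' (f t')) →
      Big t (fun u => ∑ t' ∈ domD d, coeff d t' * f t' u)

theorem big_det {t : Term} {φ ψ : Term → ℂ} (h : Big t φ) (h' : Big t ψ) : φ = ψ := by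
  induction h generalizing ψ with
  | val v => cases h' with
    | val => rfl
    | step _ h _ => exact absurd h atom_not_val
  | step f ha hf ih => cases h' with
    | val => exact absurd ha atom_not_val
    | step g ha' hg =>
        cases atom_det ha ha'
        funext u
        exact Finset.sum_congr rfl fun t' ht' => by rw [ih t' ht' (hg t' ht')]

theorem isValD_domD : ∀ (d : Distr), IsValD d → ∀ t ∈ domD d, ∃ v : Val, t = .val v
  | .zero, _, t, ht => by simp [domD] at ht
  | .single s, h, t, ht => by
      simp only [domD, Finset.mem_singleton] at ht
      subst ht
      cases t with
      | val v => exact ⟨v, rfl⟩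
      | _ => exact absurd h (by simp [IsValD, IsValT])
  | .add d₁ d₂, h, t, ht => by
      simp only [domD, Finset.mem_union] at ht
      rcases ht with ht | ht
      · exact isValD_domD d₁ h.1 t ht
      · exact isValD_domD d₂ h.2 t ht
  | .smul a d, h, t, ht => isValD_domD d h t ht

theorem sum_coeff_ext {S : Finset Term} (d : Distr) (hS : domD d ⊆ S)
    (g : Term → ℂ) :
    ∑ t ∈ domD d, coeff d t * g t = ∑ t ∈ S, coeff d t * g t :=
  Finset.sum_subset hS fun t _ ht => by rw [coeff_eq_zero d t ht, zero_mul]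

theorem eval_sound {d v : Distr} (hev : Eval d v) (hv : IsValD v) :
    ∃ f : Term → Term → ℂ, (∀ t ∈ domD d, Big t (f t)) ∧
      ∀ u, coeff v u = ∑ t ∈ domD d, coeff d t * f t u := by
  induction hev using Relation.ReflTransGen.head_induction_on with
  | refl =>
      refine ⟨fun t u => if t = u then 1 else 0, fun t ht => ?_, fun u => ?_⟩
      · obtain ⟨w, rfl⟩ := isValD_domD v hv t ht
        exact Big.val w
      · by_cases hu : u ∈ domD v
        · rw [Finset.sum_eq_single u]
          · simp
          · intro t _ htu; simp [htu]
          · intro h; exact absurd hu h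
        · rw [coeff_eq_zero v u hu, Finset.sum_eq_zero]
          intro t ht
          have : ¬ t = u := fun h => hu (h ▸ ht)
          simp [this]
  | head hstep _ ih =>
      rename_i d₀ d₁ _
      obtain ⟨a, s, s', r, hc, hc', hatom⟩ := hstep
      obtain ⟨f', hf', hcf'⟩ := ih
      -- domains
      have hdom : domD d₀ = {s} ∪ domD r := by
        rw [cong_domD hc]; simp [domD]
      have hdom' : domD d₁ = domD s' ∪ domD r := by
        rw [cong_domD hc']; simp [domD]
      set F : Term → ℂ := fun u => ∑ t' ∈ domD s', coeff s' t' * f' t' u with hF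
      have hBigs : Big s F := by
        refine Big.step f' hatom fun t' ht' => hf' t' ?_
        rw [hdom']; exact Finset.mem_union_left _ ht'
      set f : Term → Term → ℂ := fun t => if t = s then F else f' t with hfdef
      have hfr : ∀ t ∈ domD r, f t = f' t := by
        intro t ht
        by_cases hts : t = s
        · subst hts
          have h1 : Big t (f' t) := hf' t (by rw [hdom']; exact Finset.mem_union_right _ ht)
          have : f t = F := by simp [hfdef]
          rw [this, big_det hBigs h1]
        · simp [hfdef, hts]
      refine ⟨f, fun t ht => ?_, fun u => ?_⟩
      · rw [hdom] at ht
        rcases Finset.mem_union.1 ht with ht | ht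
        · rw [Finset.mem_singleton] at ht; subst ht; simpa [hfdef] using hBigs
        · rw [hfr t ht]; exact hf' t (by rw [hdom']; exact Finset.mem_union_right _ ht)
      · -- coefficient computation
        set S : Finset Term := ({s} ∪ domD r) ∪ domD s' with hSdef
        have hS1 : domD r ⊆ S := fun t ht =>
          Finset.mem_union_left _ (Finset.mem_union_right _ ht)
        have hS2 : domD s' ⊆ S := fun t ht => Finset.mem_union_right _ ht
        have hsS : s ∈ S := Finset.mem_union_left _ (Finset.mem_union_left _ (Finset.mem_singleton_self s))
        have hcoeff : ∀ t, coeff d₀ t = a * (if s = t then 1 else 0) + coeff r t := by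
          intro t; rw [cong_coeff hc t]; simp [coeff]
        have hcoeff' : ∀ t, coeff d₁ t = a * coeff s' t + coeff r t := by
          intro t; rw [cong_coeff hc' t]; simp [coeff]
        calc coeff v u = ∑ t ∈ domD d₁, coeff d₁ t * f' t u := hcf' u
          _ = ∑ t ∈ S, coeff d₁ t * f' t u := by
                apply sum_coeff_ext
                rw [hdom']; exact Finset.union_subset hS2 hS1
          _ = a * F u + ∑ t ∈ S, coeff r t * f' t u := by
                have h2 : F u = ∑ t ∈ S, coeff s' t * f' t u :=
                  sum_coeff_ext s' hS2 _
                rw [h2]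
                simp only [hcoeff', add_mul, Finset.sum_add_distrib, Finset.mul_sum,
                  mul_assoc]
          _ = a * F u + ∑ t ∈ S, coeff r t * f t u := by
                congr 1
                refine Finset.sum_congr rfl fun t ht => ?_
                by_cases htr : t ∈ domD r
                · rw [hfr t htr]
                · rw [coeff_eq_zero r t htr, zero_mul, zero_mul]
          _ = ∑ t ∈ S, (a * (if s = t then 1 else 0) + coeff r t) * f t u := by
                simp only [add_mul, Finset.sum_add_distrib]
                congr 1
                rw [Finset.sum_eq_single s]
                · simp [hfdef]
                · intro t _ hts; simp [Ne.symm hts]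
                · intro h; exact absurd hsS h
          _ = ∑ t ∈ S, coeff d₀ t * f t u := by
                refine Finset.sum_congr rfl fun t _ => ?_
                rw [hcoeff]
          _ = ∑ t ∈ domD d₀, coeff d₀ t * f t u := by
                refine (sum_coeff_ext d₀ ?_ _).symm
                rw [hdom]
                exact fun t ht => Finset.mem_union_left _ ht

theorem eval_coeff_det {d v₁ v₂ : Distr} (h₁ : Eval d v₁) (h₂ : Eval d v₂)
    (hv₁ : IsValD v₁) (hv₂ : IsValD v₂) : ∀ u, coeff v₁ u = coeff v₂ u := by
  obtain ⟨f₁, hb₁, hc₁⟩ := eval_sound h₁ hv₁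
  obtain ⟨f₂, hb₂, hc₂⟩ := eval_sound h₂ hv₂
  intro u
  rw [hc₁ u, hc₂ u]
  refine Finset.sum_congr rfl fun t ht => ?_
  rw [big_det (hb₁ t ht) (hb₂ t ht)]

theorem innerD_eq_sum {S : Finset Term} (v w : Distr) (h : domD v ⊆ S) :
    innerD v w = ∑ t ∈ S, (starRingEnd ℂ) (coeff v t) * coeff w t :=
  Finset.sum_subset h fun t _ ht => by
    rw [coeff_eq_zero v t ht, map_zero, zero_mul]

theorem innerD_congr {v v' w w' : Distr} (hv : ∀ t, coeff v t = coeff v' t)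
    (hw : ∀ t, coeff w t = coeff w' t) : innerD v w = innerD v' w' := by
  rw [innerD_eq_sum v w (Finset.subset_union_left (s₂ := domD v')),
    innerD_eq_sum v' w' (Finset.subset_union_right (s₁ := domD v))]
  exact Finset.sum_congr rfl fun t _ => by rw [hv t, hw t]

theorem innerD_conj (v w : Distr) : innerD w v = (starRingEnd ℂ) (innerD v w) := by
  rw [innerD_eq_sum w v (Finset.subset_union_right (s₁ := domD v)),
    innerD_eq_sum v w (Finset.subset_union_left (s₂ := domD w)), map_sum]
  exact Finset.sum_congr rfl fun t _ => by
    rw [map_mul, Complex.conj_conj]; ring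

theorem innerD_self (v : Distr) :
    innerD v v = ((∑ t ∈ domD v, Complex.normSq (coeff v t) : ℝ) : ℂ) := by
  rw [innerD]
  push_cast
  exact Finset.sum_congr rfl fun t _ => by
    rw [Complex.normSq_eq_conj_mul_self]

theorem sphere_inner_one {v : Distr} (hv : v ∈ Sphere) : innerD v v = 1 := by
  have h := hv.2
  rw [normD] at h
  have hre : (innerD v v).re = 1 := by
    have h0 : (0:ℝ) ≤ (innerD v v).re := by
      rw [innerD_self]
      simp only [Complex.ofReal_re]
      exact Finset.sum_nonneg fun t _ => Complex.normSq_nonneg _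
    nlinarith [Real.sq_sqrt h0, h]
  have him : (innerD v v).im = 0 := by rw [innerD_self]; simp
  exact Complex.ext hre (by rw [him]; rfl)

/-- Inner product of a two-term combination with itself. -/
theorem innerD_comb (α β : ℂ) (v₁ v₂ : Distr) :
    innerD (Distr.add (Distr.smul α v₁) (Distr.smul β v₂))
           (Distr.add (Distr.smul α v₁) (Distr.smul β v₂))
    = (starRingEnd ℂ) α * α * innerD v₁ v₁ + (starRingEnd ℂ) α * β * innerD v₁ v₂
      + (starRingEnd ℂ) β * α * innerD v₂ v₁ + (starRingEnd ℂ) β * β * innerD v₂ v₂ := by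
  set S : Finset Term := domD v₁ ∪ domD v₂ with hS
  have h1 : domD v₁ ⊆ S := Finset.subset_union_left
  have h2 : domD v₂ ⊆ S := Finset.subset_union_right
  have hW : domD (Distr.add (Distr.smul α v₁) (Distr.smul β v₂)) ⊆ S := by
    simp only [domD]; exact fun t ht => ht
  rw [innerD_eq_sum _ _ hW, innerD_eq_sum _ _ h1, innerD_eq_sum _ _ h1,
    innerD_eq_sum _ _ h2, innerD_eq_sum _ _ h2, Finset.mul_sum, Finset.mul_sum,
    Finset.mul_sum, Finset.mul_sum, ← Finset.sum_add_distrib, ← Finset.sum_add_distrib,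
    ← Finset.sum_add_distrib]
  refine Finset.sum_congr rfl fun t _ => ?_
  simp only [coeff, map_add, map_mul]
  ring

theorem cong_smul_comb {e c r : Distr} (a b : ℂ) (h : Cong e ((Distr.smul b c).add r)) :
    Cong (Distr.smul a e) ((Distr.smul (a*b) c).add (Distr.smul a r)) :=
  ((Cong.smulCongr a h).trans (Cong.smulAdd a _ _)).trans
    (Cong.addCongr (Cong.smulSmul a b c) (Cong.refl _))

theorem step_smul {d d' : Distr} (a : ℂ) (h : Step d d') :
    Step (Distr.smul a d) (Distr.smul a d') := by
  obtain ⟨b, s, s', r, hc, hc', hat⟩ := h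
  exact ⟨a*b, s, s', Distr.smul a r, cong_smul_comb a b hc, cong_smul_comb a b hc', hat⟩

theorem step_addL {d d' e : Distr} (h : Step d d') : Step (d.add e) (d'.add e) := by
  obtain ⟨b, s, s', r, hc, hc', hat⟩ := h
  exact ⟨b, s, s', r.add e,
    (Cong.addCongr hc (Cong.refl e)).trans (Cong.addAssoc _ _ _),
    (Cong.addCongr hc' (Cong.refl e)).trans (Cong.addAssoc _ _ _), hat⟩

theorem step_addR {d d' e : Distr} (h : Step d d') : Step (e.add d) (e.add d') := by
  obtain ⟨b, s, s', r, hc, hc', hat⟩ := h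
  exact ⟨b, s, s', r.add e,
    ((Cong.addComm e d).trans (Cong.addCongr hc (Cong.refl e))).trans (Cong.addAssoc _ _ _),
    ((Cong.addComm e d').trans (Cong.addCongr hc' (Cong.refl e))).trans (Cong.addAssoc _ _ _),
    hat⟩

theorem eval_smul {d d' : Distr} (a : ℂ) (h : Eval d d') :
    Eval (Distr.smul a d) (Distr.smul a d') := by
  induction h with
  | refl => exact Relation.ReflTransGen.refl
  | tail _ hstep ih => exact ih.tail (step_smul a hstep)

theorem eval_addL {d d' e : Distr} (h : Eval d d') : Eval (d.add e) (d'.add e) := by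
  induction h with
  | refl => exact Relation.ReflTransGen.refl
  | tail _ hstep ih => exact ih.tail (step_addL hstep)

theorem eval_addR {d d' e : Distr} (h : Eval d d') : Eval (e.add d) (e.add d') := by
  induction h with
  | refl => exact Relation.ReflTransGen.refl
  | tail _ hstep ih => exact ih.tail (step_addR hstep)

theorem eval_comb {a b : ℂ} {T₁ T₂ w₁ w₂ : Distr} (h₁ : Eval T₁ w₁) (h₂ : Eval T₂ w₂) :
    Eval ((Distr.smul a T₁).add (Distr.smul b T₂))
         ((Distr.smul a w₁).add (Distr.smul b w₂)) :=
  (eval_addL (eval_smul a h₁)).trans (eval_addR (eval_smul b h₂))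

theorem applySub_append (σ₁ : Subst) : ∀ (d : Distr) (σ₂ : Subst),
    applySub d (σ₁ ++ σ₂) = applySub (applySub d σ₁) σ₂ := by
  induction σ₁ with
  | nil => intro d σ₂; rfl
  | cons p σ ih => intro d σ₂; exact ih _ σ₂

theorem subMem_append {σ : Subst} {Δ : Ctx} (h : SubMem σ Δ) {x : ℕ} {u : Distr}
    {A : Set Distr} (hu : u ∈ A) : SubMem (σ ++ [(x, u)]) (Δ ++ [(x, A)]) :=
  List.rel_append h (List.forall₂_cons.2 ⟨⟨rfl, hu⟩, List.Forall₂.nil⟩)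

/-- Typed terms preserve inner products (one variable). -/
theorem typed_preserve_inner (Δ : Ctx) (hΔ : CtxUnitary Δ)
    (hnodup : (Δ.map Prod.fst).Nodup)
    (A C : Set Distr) (hA : A ⊆ Sphere) (hC : C ⊆ Sphere)
    (x : ℕ) (hx : x ∉ Δ.map Prod.fst) (s : Distr)
    (hjud : ValidJ (Δ ++ [(x, sharpT A)]) s C)
    (σ : Subst) (hσ : SubMem σ Δ)
    (u₁ u₂ : Distr) (hu₁ : u₁ ∈ sharpT A) (hu₂ : u₂ ∈ sharpT A) :
    ∃ w₁ w₂ : Distr, w₁ ∈ C ∧ w₂ ∈ C ∧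
      Eval (applySub s (σ ++ [(x, u₁)])) w₁ ∧
      Eval (applySub s (σ ++ [(x, u₂)])) w₂ ∧
      innerD w₁ w₂ = innerD u₁ u₂ := by
  have main : ∀ u, u ∈ sharpT A → ∃ w ∈ C, Eval (applySub s (σ ++ [(x, u)])) w := by
    intro u hu
    exact hjud.2.2 (σ ++ [(x, u)]) (subMem_append hσ hu)
  obtain ⟨w₁, hw₁C, hev₁⟩ := main u₁ hu₁
  obtain ⟨w₂, hw₂C, hev₂⟩ := main u₂ hu₂
  refine ⟨w₁, w₂, hw₁C, hw₂C, hev₁, hev₂, ?_⟩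
  have hu₁S : u₁ ∈ Sphere := hu₁.2
  have hu₂S : u₂ ∈ Sphere := hu₂.2
  have hw₁S : w₁ ∈ Sphere := hC hw₁C
  have hw₂S : w₂ ∈ Sphere := hC hw₂C
  set cc : ℂ := innerD u₁ u₂ with hcc
  set dd : ℂ := innerD w₁ w₂ with hdd
  have hre_aux : ∀ (t : ℝ) (Z : ℂ), ((t:ℂ)^2 * (2 + Z + (starRingEnd ℂ) Z)).re
      = t^2 * (2 + 2*Z.re) := by
    intro t Z
    simp only [pow_two, Complex.mul_re, Complex.mul_im, Complex.add_re, Complex.add_im,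
      Complex.conj_re, Complex.conj_im, Complex.ofReal_re, Complex.ofReal_im,
      Complex.re_ofNat, Complex.im_ofNat]
    ring
  have key : ∀ μ : ℂ, (starRingEnd ℂ) μ * μ = 1 →
      0 < 2 + 2*(μ * cc).re → (μ * dd).re = (μ * cc).re := by
    intro μ hμ hpos
    set g : ℝ := 2 + 2*(μ*cc).re with hgdef
    set t : ℝ := Real.sqrt g⁻¹ with htdef
    have ht2 : t^2 = g⁻¹ := Real.sq_sqrt (inv_nonneg.2 hpos.le)
    have hg0 : g ≠ 0 := ne_of_gt hpos
    set uc : Distr := (Distr.smul (t:ℂ) u₁).add (Distr.smul ((t:ℂ)*μ) u₂) with hucdef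
    have hucval : innerD uc uc = (t:ℂ)^2 * (2 + μ*cc + (starRingEnd ℂ) (μ*cc)) := by
      rw [hucdef, innerD_comb, sphere_inner_one hu₁S, sphere_inner_one hu₂S,
        innerD_conj u₁ u₂, ← hcc]
      simp only [map_mul, Complex.conj_ofReal]
      linear_combination (t:ℂ)^2 * hμ
    have hre1 : (innerD uc uc).re = 1 := by
      rw [hucval, hre_aux, ht2, ← hgdef]
      field_simp
    have hucA : uc ∈ sharpT A := by
      refine ⟨Span.add (Span.smul _ hu₁.1) (Span.smul _ hu₂.1), ⟨?_, ?_⟩, ?_⟩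
      · exact ⟨hu₁S.1.1, hu₂S.1.1⟩
      · show fvD uc = ∅
        rw [hucdef]
        show fvD u₁ ∪ fvD u₂ = ∅
        rw [hu₁S.1.2, hu₂S.1.2]; simp
      · show Real.sqrt (innerD uc uc).re = 1
        rw [hre1, Real.sqrt_one]
    obtain ⟨wu, hwuC, hevu⟩ := main uc hucA
    have happ : ∀ w : Distr, applySub s (σ ++ [(x,w)]) = bsubst x (applySub s σ) w :=
      fun w => by rw [applySub_append]; rfl
    have hlin : applySub s (σ ++ [(x,uc)]) =
        (Distr.smul (t:ℂ) (applySub s (σ ++ [(x,u₁)]))).add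
        (Distr.smul ((t:ℂ)*μ) (applySub s (σ ++ [(x,u₂)]))) := by
      rw [happ, happ, happ, hucdef]; rfl
    set W : Distr := (Distr.smul (t:ℂ) w₁).add (Distr.smul ((t:ℂ)*μ) w₂) with hWdef
    have hevW : Eval (applySub s (σ ++ [(x,uc)])) W := by
      rw [hlin]; exact eval_comb hev₁ hev₂
    have hWv : IsValD W := ⟨hw₁S.1.1, hw₂S.1.1⟩
    have hwuv : IsValD wu := (hC hwuC).1.1
    have hcoeffEq := eval_coeff_det hevW hevu hWv hwuv
    have hII : innerD W W = innerD wu wu := innerD_congr hcoeffEq hcoeffEq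
    have hWval : innerD W W = (t:ℂ)^2 * (2 + μ*dd + (starRingEnd ℂ) (μ*dd)) := by
      rw [hWdef, innerD_comb, sphere_inner_one hw₁S, sphere_inner_one hw₂S,
        innerD_conj w₁ w₂, ← hdd]
      simp only [map_mul, Complex.conj_ofReal]
      linear_combination (t:ℂ)^2 * hμ
    have h1 : innerD wu wu = 1 := sphere_inner_one (hC hwuC)
    have hreW : t^2 * (2 + 2*(μ*dd).re) = 1 := by
      have h2 := congrArg Complex.re (hWval.symm.trans (hII.trans h1))
      rw [hre_aux] at h2
      simpa using h2
    rw [ht2] at hreW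
    have hgg : 2 + 2*(μ*dd).re = g := by
      have h5 : g * (g⁻¹ * (2 + 2*(μ*dd).re)) = g * 1 := by rw [hreW]
      rwa [← mul_assoc, mul_inv_cancel₀ hg0, one_mul, mul_one] at h5
    rw [hgdef] at hgg
    linarith
  have hre : dd.re = cc.re := by
    rcases lt_or_ge (-1 : ℝ) cc.re with h | h
    · have hk := key 1 (by simp) (by simp; linarith)
      simpa using hk
    · have hk := key (-1) (by simp) (by simp [Complex.neg_re]; linarith)
      simp only [neg_one_mul, Complex.neg_re] at hk
      linarith
  have him : dd.im = cc.im := by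
    rcases lt_or_ge cc.im (1 : ℝ) with h | h
    · have hk := key Complex.I (by simp) (by simp [Complex.mul_re]; linarith)
      simp only [Complex.mul_re, Complex.I_re, Complex.I_im] at hk
      linarith
    · have hk := key (-Complex.I) (by simp) (by simp [Complex.mul_re]; linarith)
      simp only [Complex.mul_re, Complex.neg_re, Complex.neg_im, Complex.I_re,
        Complex.I_im] at hk
      linarith
  exact Complex.ext hre him

end LinAlg
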